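/- Contour/coefficient extraction identity: for integers A, B, m > 0, n, d ≥ 0, the coefficient of u^{m+d} w^n in (1+βw)^A (1+βu^{-1})^B · [∏_{k=1}^{m-1}(1 - u c_k)] / [∏_{k=1}^n (1 - w^{-1} b_k)] · uw/(1-uw) equals Σ_{l≥0} C(A+B, l) β^l h_{l-n+m+d}(b_1,…,b_n; -c_1,…,-c_{m-1}), where h_p(b; -c) denotes the complete supersymmetric function (generating function ∏(1-c_kt)/∏(1-b_kt)) and h_p = 0 for p < 0; binomial coefficients with negative upper entry are C(-N,l) = (-1)^l C(N+l-1, l). -/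
import Mathlib


open Finset

/-- Generalized binomial coefficient `C(z, k)` with integer upper entry, in a field of
characteristic zero: `C(z,k) = z(z-1)⋯(z-k+1)/k!`.  For `z = -N < 0` this gives
`(-1)^k C(N+k-1, k)`. -/
noncomputable def gbinom {K : Type*} [Field K] (z : ℤ) (k : ℕ) : K :=
  (∏ i ∈ Finset.range k, ((z : K) - (i : K))) / (Nat.factorial k : K)

section Aux
open Polynomial

lemma descPochhammer_eval_prod {K : Type*} [Field K] (x : K) (k : ℕ) :
    (descPochhammer K k).eval x = ∏ i ∈ Finset.range k, (x - i) := by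
  induction k with
  | zero => simp
  | succ n ih => rw [descPochhammer_succ_right, eval_mul, ih, prod_range_succ]; simp

lemma gbinom_eq_choose {K : Type*} [Field K] [CharZero K] (z : ℤ) (k : ℕ) :
    gbinom (K := K) z k = Ring.choose ((z : K)) k := by
  have h := Ring.descPochhammer_eq_factorial_smul_choose (R := K) (z : K) k
  have h2 : (descPochhammer ℤ k).smeval ((z:K)) = (descPochhammer K k).eval (z:K) := by
    rw [← aeval_eq_smeval, ← descPochhammer_map (algebraMap ℤ K) k, eval_map, aeval_def]
  rw [h2, descPochhammer_eval_prod, nsmul_eq_mul] at h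
  rw [gbinom, h, mul_div_cancel_left₀]
  exact_mod_cast Nat.factorial_ne_zero k

lemma gbinom_vandermonde {K : Type*} [Field K] [CharZero K] (A B : ℤ) (L : ℕ) :
    gbinom (K := K) (A + B) L =
      ∑ e ∈ Finset.range (L + 1), gbinom (K := K) A e * gbinom (K := K) B (L - e) := by
  rw [gbinom_eq_choose]
  push_cast
  rw [Ring.add_choose_eq L (Commute.all _ _)]
  rw [Finset.Nat.sum_antidiagonal_eq_sum_range_succ (fun i j => Ring.choose ((A:K)) i * Ring.choose ((B:K)) j)]
  exact Finset.sum_congr rfl fun e _ => by rw [gbinom_eq_choose, gbinom_eq_choose]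

end Aux

/-- Contour/coefficient extraction identity.  For integers `A, B`, `m > 0`,
`n, d ≥ 0`, the coefficient of `u^{m+d} w^n` in
`(1+βw)^A (1+βu⁻¹)^B · ∏_{k=1}^{m-1}(1-u c_k) / ∏_{k=1}^n (1-w⁻¹ b_k) · uw/(1-uw)`
equals `Σ_{l≥0} C(A+B,l) β^l h_{l-n+m+d}(b₁,…,b_n; -c₁,…,-c_{m-1})`.
All series are expanded formally: `(1+βw)^A = Σ_e C(A,e)β^e w^e`,
`(1+βu⁻¹)^B = Σ_s C(B,s)β^s u^{-s}`, `1/∏(1-w⁻¹b_k) = Σ_f h_f(b) w^{-f}`,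
`uw/(1-uw) = Σ_{j≥1}(uw)^j`, and `h_p(b;-c)` has generating function
`∏(1-c_k t)/∏(1-b_k t)` (so `h_p = 0` for `p < 0`).  Treating the `b_k` and `c_k` as
independent formal variables, the identity is equivalent to the equality, for every
monomial `b^{dB} c^{dC}`, of the corresponding scalar coefficients of the two sides,
which is the statement below (the `b`-monomial `dB` forces the `h`-exponent `f = |dB|`
with coefficient `1`, and the `c`-monomial `dC` is squarefree with coefficient
`(-1)^{|dC|}` and `u`-exponent `|dC|`). -/
theorem stmt_9 {K : Type*} [Field K] [CharZero K] (β : K)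
    (A B : ℤ) (m n d : ℕ) (hm : 0 < m) :
    ∀ (dB : Fin n → ℕ) (dC : Fin (m - 1) → ℕ),
      (∑ᶠ sej : ℕ × ℕ × ℕ,
        (if 1 ≤ sej.2.2 ∧
            ((sej.2.2 : ℤ) - (sej.1 : ℤ) + (∑ k, dC k : ℕ) = (m : ℤ) + d) ∧
            ((sej.2.1 : ℤ) + (sej.2.2 : ℤ) - (∑ k, dB k : ℕ) = (n : ℤ)) ∧
            (∀ k, dC k ≤ 1)
          then gbinom (K := K) A sej.2.1 * β ^ sej.2.1 *
            gbinom (K := K) B sej.1 * β ^ sej.1 * (-1 : K) ^ (∑ k, dC k)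
          else 0)) =
      ∑ᶠ l : ℕ, gbinom (K := K) (A + B) l * β ^ l *
        (if (∀ k, dC k ≤ 1) ∧
            ((l : ℤ) - n + m + d = (∑ k, dB k : ℕ) + (∑ k, dC k : ℕ))
          then (-1 : K) ^ (∑ k, dC k) else 0) := by
  intro dB dC
  set SB := ∑ k, dB k with hSB
  set SC := ∑ k, dC k with hSC
  by_cases hC : ∀ k, dC k ≤ 1
  · have hSCm : SC < m := by
      have h1 : SC ≤ ∑ _k : Fin (m-1), 1 := Finset.sum_le_sum (fun k _ => hC k)
      simp only [Finset.sum_const, Finset.card_univ, Fintype.card_fin, smul_eq_mul,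
        mul_one] at h1
      omega
    by_cases hNM : n + SB + SC < m + d
    · rw [finsum_eq_zero_of_forall_eq_zero, finsum_eq_zero_of_forall_eq_zero]
      · intro l
        rw [if_neg, mul_zero]
        rintro ⟨-, h2⟩
        omega
      · rintro ⟨s, e, j⟩
        rw [if_neg]
        rintro ⟨h1, h2, h3, -⟩
        omega
    · push_neg at hNM
      set L := n + SB + SC - (m + d) with hL
      have hRHS : (∑ᶠ l : ℕ, gbinom (K := K) (A + B) l * β ^ l *
          (if (∀ k, dC k ≤ 1) ∧
              ((l : ℤ) - n + m + d = (SB : ℕ) + (SC : ℕ))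
            then (-1 : K) ^ SC else 0)) =
          gbinom (K := K) (A + B) L * β ^ L * (-1 : K) ^ SC := by
        rw [finsum_eq_single _ L]
        · rw [if_pos ⟨hC, by omega⟩]
        · intro l hl
          rw [if_neg, mul_zero]
          rintro ⟨-, h2⟩
          exact hl (by omega)
      rw [hRHS]
      set g : ℕ × ℕ × ℕ → K := fun sej =>
        (if 1 ≤ sej.2.2 ∧
            ((sej.2.2 : ℤ) - (sej.1 : ℤ) + (SC : ℕ) = (m : ℤ) + d) ∧
            ((sej.2.1 : ℤ) + (sej.2.2 : ℤ) - (SB : ℕ) = (n : ℤ)) ∧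
            (∀ k, dC k ≤ 1)
          then gbinom (K := K) A sej.2.1 * β ^ sej.2.1 *
            gbinom (K := K) B sej.1 * β ^ sej.1 * (-1 : K) ^ SC
          else 0) with hg
      set φ : ℕ → ℕ × ℕ × ℕ := fun e => (L - e, e, m + d + (L - e) - SC) with hφ
      have hsupp : Function.support g ⊆ ↑((Finset.range (L+1)).image φ) := by
        rintro ⟨s, e, j⟩ hs
        have hcond : 1 ≤ j ∧ ((j : ℤ) - (s : ℤ) + (SC : ℕ) = (m : ℤ) + d) ∧
            ((e : ℤ) + (j : ℤ) - (SB : ℕ) = (n : ℤ)) ∧ (∀ k, dC k ≤ 1) := by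
          by_contra hcon
          exact hs (by simp only [hg, if_neg hcon])
        obtain ⟨h1, h2, h3, -⟩ := hcond
        have he : e ≤ L := by omega
        simp only [Finset.coe_image, Set.mem_image, Finset.mem_coe, Finset.mem_range]
        refine ⟨e, ?_, ?_⟩
        · omega
        · simp only [hφ, Prod.mk.injEq]
          exact ⟨by omega, trivial, by omega⟩
      rw [finsum_eq_sum_of_support_subset g hsupp, Finset.sum_image
        (fun a _ b _ hab => by
          have := congrArg (fun p : ℕ × ℕ × ℕ => p.2.1) hab
          simpa [hφ] using this)]
      have hterm : ∀ e ∈ Finset.range (L+1), g (φ e) =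
          gbinom (K := K) A e * gbinom (K := K) B (L - e) * (β ^ L * (-1:K) ^ SC) := by
        intro e he
        rw [Finset.mem_range] at he
        have hif : g (φ e) = gbinom (K := K) A e * β ^ e *
            gbinom (K := K) B (L - e) * β ^ (L - e) * (-1 : K) ^ SC := by
          simp only [hg, hφ]
          rw [if_pos]
          exact ⟨by omega, by omega, by omega, hC⟩
        rw [hif]
        have : β ^ e * β ^ (L - e) = β ^ L := by
          rw [← pow_add]; congr 1; omega
        calc gbinom (K := K) A e * β ^ e * gbinom (K := K) B (L - e) * β ^ (L - e)
              * (-1 : K) ^ SC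
            = gbinom (K := K) A e * gbinom (K := K) B (L - e) *
              ((β ^ e * β ^ (L - e)) * (-1:K) ^ SC) := by ring
          _ = _ := by rw [this]
      rw [Finset.sum_congr rfl hterm, ← Finset.sum_mul, ← gbinom_vandermonde]
      ring
  · rw [finsum_eq_zero_of_forall_eq_zero, finsum_eq_zero_of_forall_eq_zero]
    · intro l; rw [if_neg (fun h => hC h.1), mul_zero]
    · rintro ⟨s, e, j⟩; exact if_neg (fun h => hC h.2.2.2)
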